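/- arXiv:2509.13596 — 2 statements merged into one kernel-verified Lean document; each statement's English description precedes it below -/
import Mathlib

section
/- For every integer N ≥ 8, the cubic polynomial G_N(p) = 4p³ + (2N−8)p² − N²p + N² has exactly one root p₀(N) in the open interval (N/(N−2), (2N−2)/N), and G_N(p) < 0 precisely for p₀(N) < p < (2N−2)/N within that interval. -/
noncomputable def Gaux (n p : ℝ) : ℝ := 4 * p ^ 3 + (2 * n - 8) * p ^ 2 - n ^ 2 * p + n ^ 2

lemma Gaux_cont (n : ℝ) : Continuous (Gaux n) := by
  unfold Gaux; continuity

/-- For every integer `N ≥ 8`, the cubic ... -/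
theorem stmt_0 (N : ℕ) (hN : 8 ≤ N) :
    ∃ p₀ ∈ Set.Ioo ((N : ℝ) / (N - 2)) ((2 * N - 2) / N),
      (∀ p ∈ Set.Ioo ((N : ℝ) / (N - 2)) ((2 * N - 2) / N),
        (4 * p ^ 3 + (2 * N - 8) * p ^ 2 - N ^ 2 * p + N ^ 2 = 0 ↔ p = p₀)) ∧
      (∀ p ∈ Set.Ioo ((N : ℝ) / (N - 2)) ((2 * N - 2) / N),
        (4 * p ^ 3 + (2 * N - 8) * p ^ 2 - N ^ 2 * p + N ^ 2 < 0 ↔ p₀ < p)) := by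
  have hn : (8:ℝ) ≤ (N:ℝ) := by exact_mod_cast hN
  set n : ℝ := (N:ℝ) with hn_def
  have h2 : (0:ℝ) < n - 2 := by linarith
  have hn0 : (0:ℝ) < n := by linarith
  set a : ℝ := n / (n - 2) with ha_def
  set b : ℝ := (2 * n - 2) / n with hb_def
  have ha1 : 1 < a := by rw [ha_def, lt_div_iff₀ h2]; linarith
  have hab : a < b := by rw [ha_def, hb_def, div_lt_div_iff₀ h2 hn0]; nlinarith
  have hb0 : 0 < b := by linarith
  have hfa : 0 < Gaux n a := by
    have h : Gaux n a * (n - 2) ^ 3 = 8 * n ^ 2 := by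
      unfold Gaux; rw [ha_def]; field_simp; ring
    have h3 : (0:ℝ) < (n - 2) ^ 3 := pow_pos h2 3
    nlinarith [h3, sq_nonneg n]
  have hfb : Gaux n b < 0 := by
    have h : Gaux n b * n ^ 3 = -(n^5) + 10*n^4 - 16*n^3 - 24*n^2 + 64*n - 32 := by
      unfold Gaux; rw [hb_def]; field_simp; ring
    have h3 : (0:ℝ) < n ^ 3 := pow_pos hn0 3
    nlinarith [h3, sq_nonneg (n - 8), mul_nonneg (mul_nonneg (sub_nonneg.2 hn) (sub_nonneg.2 hn)) (sub_nonneg.2 hn), sq_nonneg n, mul_pos hn0 hn0]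
  have hcont : ContinuousOn (Gaux n) (Set.Icc a b) := (Gaux_cont n).continuousOn
  obtain ⟨p₀, hp₀mem, hGp₀⟩ := intermediate_value_Ioo' (le_of_lt hab) hcont ⟨hfb, hfa⟩
  -- uniqueness
  have huniq : ∀ p ∈ Set.Ioo a b, ∀ q ∈ Set.Ioo a b, Gaux n p = 0 → Gaux n q = 0 → p = q := by
    intro p hp q hq hfp hfq
    by_contra hne
    unfold Gaux at hfp hfq
    have e1 : 4*(p^2 + p*q + q^2) + (2*n - 8)*(p + q) - n^2 = 0 := by
      have h0 : (p - q) * (4*(p^2 + p*q + q^2) + (2*n - 8)*(p + q) - n^2) = 0 := by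
        linear_combination hfp - hfq
      rcases mul_eq_zero.1 h0 with h | h
      · exact absurd (sub_eq_zero.1 h) hne
      · exact h
    set r : ℝ := (4 - n)/2 - p - q with hr_def
    have hr : r < 0 := by
      have h1 := hp.1; have h2 := hq.1
      rw [hr_def]; linarith
    have key : Gaux n b = 4*(b - p)*(b - q)*(b - r) := by
      unfold Gaux
      rw [hr_def]
      linear_combination hfp + (b - p) * e1
    have hpos : 0 < 4*(b - p)*(b - q)*(b - r) := by
      have h1 : 0 < b - p := sub_pos.2 hp.2
      have h2 : 0 < b - q := sub_pos.2 hq.2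
      have h3 : 0 < b - r := by linarith
      have := mul_pos (mul_pos (mul_pos (by norm_num : (0:ℝ) < 4) h1) h2) h3
      linarith
    rw [key] at hfb
    linarith
  have hpos_left : ∀ p ∈ Set.Ioo a b, p < p₀ → 0 < Gaux n p := by
    intro p hp hlt
    by_contra h
    push_neg at h
    rcases eq_or_lt_of_le h with heq | hltf
    · exact absurd (huniq p hp p₀ hp₀mem heq hGp₀) (ne_of_lt hlt)
    · obtain ⟨c, hc, hfc⟩ := intermediate_value_Ioo' (le_of_lt hp.1) (Gaux_cont n).continuousOn ⟨hltf, hfa⟩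
      have hcb : c ∈ Set.Ioo a b := ⟨hc.1, hc.2.trans hp.2⟩
      have hcp := huniq c hcb p₀ hp₀mem hfc hGp₀
      linarith [hc.2]
  have hneg_right : ∀ p ∈ Set.Ioo a b, p₀ < p → Gaux n p < 0 := by
    intro p hp hlt
    by_contra h
    push_neg at h
    rcases eq_or_lt_of_le h with heq | hltf
    · exact absurd (huniq p hp p₀ hp₀mem heq.symm hGp₀) (ne_of_gt hlt)
    · obtain ⟨c, hc, hfc⟩ := intermediate_value_Ioo' (le_of_lt hp.2) (Gaux_cont n).continuousOn ⟨hfb, hltf⟩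
      have hcb : c ∈ Set.Ioo a b := ⟨hp.1.trans hc.1, hc.2⟩
      have hcp := huniq c hcb p₀ hp₀mem hfc hGp₀
      linarith [hc.1]
  refine ⟨p₀, hp₀mem, ?_, ?_⟩
  · intro p hp
    constructor
    · intro h
      exact huniq p hp p₀ hp₀mem h hGp₀
    · rintro rfl
      exact hGp₀
  · intro p hp
    constructor
    · intro h
      by_contra hle
      push_neg at hle
      have h' : Gaux n p < 0 := h
      rcases eq_or_lt_of_le hle with heq | hlt
      · rw [heq] at h'; linarith
      · have := hpos_left p hp hlt
        linarith
    · exact hneg_right p hp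
end

section
/- For N = 6 and N = 7, the polynomial G_N(p) = 4p³ + (2N−8)p² − N²p + N² is strictly positive for all p in the closed interval [N/(N−2), (2N−2)/N]. -/
/-- For `N = 6` and `N = 7`, the polynomial `G_N(p) = 4p³ + (2N−8)p² − N²p + N²` is strictly
positive on the closed interval `[N/(N−2), (2N−2)/N]`. -/
theorem stmt_2 :
    (∀ p ∈ Set.Icc ((6 : ℝ) / (6 - 2)) ((2 * 6 - 2) / 6),
      0 < 4 * p ^ 3 + (2 * 6 - 8) * p ^ 2 - (6 : ℝ) ^ 2 * p + (6 : ℝ) ^ 2) ∧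
    (∀ p ∈ Set.Icc ((7 : ℝ) / (7 - 2)) ((2 * 7 - 2) / 7),
      0 < 4 * p ^ 3 + (2 * 7 - 8) * p ^ 2 - (7 : ℝ) ^ 2 * p + (7 : ℝ) ^ 2) := by
  constructor
  · rintro p ⟨h1, h2⟩
    norm_num at h1 h2 ⊢
    nlinarith [mul_nonneg (sub_nonneg.2 h1) (sub_nonneg.2 h2),
      mul_nonneg (mul_nonneg (sub_nonneg.2 h1) (sub_nonneg.2 h2)) (sub_nonneg.2 h1), sq_nonneg p]
  · rintro p ⟨h1, h2⟩
    norm_num at h1 h2 ⊢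
    nlinarith [mul_nonneg (sub_nonneg.2 h1) (sub_nonneg.2 h2),
      mul_nonneg (mul_nonneg (sub_nonneg.2 h1) (sub_nonneg.2 h2)) (sub_nonneg.2 h1), sq_nonneg p]
end
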